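/- Under the hypotheses of Lemma 1 (F built from a Laplacian L̃ whose zero eigenvalue has geometric multiplicity q, positive diagonal Δ̃ on nodes with neighbors, positive diagonal gain Q*, and R > 0), the kernel of F has dimension exactly q; in particular, if the graph is strongly connected, ker F is one-dimensional and spanned by (1, 0). -/
import Mathlib


open Matrix

/-- Lemma 1 (kernel dimension): for
`F = [[L̃, -Δ̃], [Q* L̃, -Q*((1/R) I + Δ̃)]]` with `L̃ · 1 = 0`, positive diagonal
`Δ̃` and `Q*`, and `R > 0`, the kernel of `F` has the same dimension `q` as the kernel of
`L̃` (the geometric multiplicity of the zero eigenvalue of `L̃`); in particular, if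
`ker L̃` is spanned by the all-ones vector (strong connectivity), then `ker F` is
one-dimensional, spanned by `(1, 0)`. -/
theorem kernel_of_F_dimension (N : ℕ)
    (L : Matrix (Fin N) (Fin N) ℝ) (hL : L *ᵥ (fun _ => (1 : ℝ)) = 0)
    (d q : Fin N → ℝ) (hd : ∀ i, 0 < d i) (hq : ∀ i, 0 < q i) (R : ℝ) (hR : 0 < R) :
    let Δ : Matrix (Fin N) (Fin N) ℝ := Matrix.diagonal d
    let Q : Matrix (Fin N) (Fin N) ℝ := Matrix.diagonal q
    let F : Matrix (Fin N ⊕ Fin N) (Fin N ⊕ Fin N) ℝ :=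
      Matrix.fromBlocks L (-Δ) (Q * L) (-(Q * ((1 / R) • (1 : Matrix (Fin N) (Fin N) ℝ) + Δ)))
    Module.finrank ℝ (LinearMap.ker F.mulVecLin) =
      Module.finrank ℝ (LinearMap.ker L.mulVecLin) ∧
    (LinearMap.ker L.mulVecLin = Submodule.span ℝ {fun _ => (1 : ℝ)} →
      LinearMap.ker F.mulVecLin =
        Submodule.span ℝ {Sum.elim (fun _ => (1 : ℝ)) (fun _ => (0 : ℝ))}) := by
  intro Δ Q F
  classical
  let e : (Fin N → ℝ) →ₗ[ℝ] (Fin N ⊕ Fin N → ℝ) :=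
    { toFun := fun x => Sum.elim x 0
      map_add' := by intro a b; funext i; cases i <;> simp
      map_smul' := by intro c a; funext i; cases i <;> simp }
  have he : Function.Injective e := by
    intro a b hab
    funext i
    exact congrFun hab (Sum.inl i)
  have hker : LinearMap.ker F.mulVecLin = (LinearMap.ker L.mulVecLin).map e := by
    ext v
    simp only [Submodule.mem_map, LinearMap.mem_ker, Matrix.mulVecLin_apply]
    constructor
    · intro hv
      set x := v ∘ Sum.inl with hx
      set y := v ∘ Sum.inr with hy
      have hv' : v = Sum.elim x y := by funext i; cases i <;> rfl
      rw [hv', fromBlocks_mulVec] at hv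
      have h1 : ∀ i, (L *ᵥ x) i - d i * y i = 0 := by
        intro i
        have := congrFun hv (Sum.inl i)
        simpa [Δ, mulVec_diagonal, neg_mulVec, sub_eq_add_neg] using this
      have hy0 : ∀ i, y i = 0 := by
        intro i
        have e1 := h1 i
        have e2 := congrFun hv (Sum.inr i)
        simp only [Q, Δ, ← mulVec_mulVec, mulVec_diagonal, add_mulVec, smul_mulVec,
          one_mulVec, neg_mulVec, Pi.add_apply, Pi.neg_apply, Pi.smul_apply, smul_eq_mul,
          Sum.elim_inr, Pi.zero_apply, Sum.elim_comp_inl, Sum.elim_comp_inr] at e2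
        have hqi := hq i
        have hRi : 0 < 1 / R := by positivity
        have hmul : q i * ((1 / R) * y i) = 0 := by
          linear_combination q i * e1 - e2
        rcases mul_eq_zero.mp hmul with h | h
        · exact absurd h (ne_of_gt hqi)
        · rcases mul_eq_zero.mp h with h' | h'
          · exact absurd h' (ne_of_gt hRi)
          · exact h'
      have hx0 : L *ᵥ x = 0 := by
        funext i
        have := h1 i
        simp [hy0 i] at this
        simpa using this
      refine ⟨x, hx0, ?_⟩
      funext i
      cases i with
      | inl i => rfl
      | inr i => exact (hy0 i).symm
    · rintro ⟨x, hx, rfl⟩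
      have hv' : (e x : Fin N ⊕ Fin N → ℝ) = Sum.elim x 0 := rfl
      rw [hv', fromBlocks_mulVec]
      funext i
      cases i with
      | inl i => simp [hx]
      | inr i => simp [Q, ← mulVec_mulVec, hx]
  constructor
  · rw [hker]
    exact ((Submodule.equivMapOfInjective e he _).finrank_eq).symm
  · intro h
    rw [hker, h, Submodule.map_span, Set.image_singleton]
    rfl
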